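/- Let ε ∈ (0,1), n ∈ ℕ, and let A ⊆ {±1}^n ⊂ ℓ_2^n be a symmetric set (A = -A) in which any two distinct points differ in more than 3εn coordinates. Then any map f : A → ℝ that has expansion at most 1+ε with respect to the Euclidean metric (|f(x)-f(y)| ≤ (1+ε)‖x-y‖_2) can satisfy at most one antipodal pair, where pair {x,-x} is satisfied if |f(x) - f(-x)| ≥ √(4n) = ‖x - (-x)‖_2. -/

import Mathlib

lemma cross_pair (a b c d D : ℝ) (hab : D ≤ |a - b|) (hcd : D ≤ |c - d|)
    (h1 : |a - c| < D) (h2 : |a - d| < D) (h3 : |b - c| < D) (h4 : |b - d| < D) : False := by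
  rw [abs_sub_lt_iff] at h1 h2 h3 h4
  rcases le_abs.1 hab with h | h <;> rcases le_abs.1 hcd with h' | h' <;>
    [skip; skip; skip; skip] <;>
    · obtain ⟨a1, a2⟩ := h1; obtain ⟨b1, b2⟩ := h2; obtain ⟨c1, c2⟩ := h3; obtain ⟨d1, d2⟩ := h4
      linarith

theorem stmt8 (ε : ℝ) (hε0 : 0 < ε) (hε1 : ε < 1) (n : ℕ)
    (A : Set (EuclideanSpace ℝ (Fin n)))
    (hpm : ∀ x ∈ A, ∀ k, x k = 1 ∨ x k = -1)
    (hsym : ∀ x ∈ A, -x ∈ A)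
    (hsep : ∀ x ∈ A, ∀ y ∈ A, x ≠ y →
      3 * ε * n < (Finset.univ.filter (fun k : Fin n => x k ≠ y k)).card)
    (f : EuclideanSpace ℝ (Fin n) → ℝ)
    (hf : ∀ x ∈ A, ∀ y ∈ A, |f x - f y| ≤ (1 + ε) * dist x y) :
    ∀ x ∈ A, ∀ y ∈ A,
      Real.sqrt (4 * n) ≤ |f x - f (-x)| →
      Real.sqrt (4 * n) ≤ |f y - f (-y)| →
      x = y ∨ x = -y := by
  intro x hx y hy hfx hfy
  rcases Nat.eq_zero_or_pos n with hn | hn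
  · subst hn
    left
    ext k
    exact absurd k.2 (by simp)
  by_contra hcon
  push_neg at hcon
  obtain ⟨hxy, hxny⟩ := hcon
  -- key: for any u v in A with u ≠ -v, |f u - f v| < √(4n)
  have key : ∀ u ∈ A, ∀ v ∈ A, u ≠ -v → |f u - f v| < Real.sqrt (4 * n) := by
    intro u hu v hv hne
    have hsep' := hsep u hu (-v) (hsym v hv) hne
    -- set of coords where u ≠ -v is the set where u = v
    have hagree : (Finset.univ.filter (fun k : Fin n => u k ≠ (-v) k))
        = Finset.univ.filter (fun k : Fin n => u k = v k) := by
      apply Finset.filter_congr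
      intro k _
      have huk := hpm u hu k
      have hvk := hpm v hv k
      have : (-v) k = -(v k) := rfl
      rw [this]
      rcases huk with h | h <;> rcases hvk with h' | h' <;> simp [h, h'] <;> norm_num
    rw [hagree] at hsep'
    set s := Finset.univ.filter (fun k : Fin n => u k = v k) with hs
    set t := Finset.univ.filter (fun k : Fin n => ¬ u k = v k) with ht
    have hcard : s.card + t.card = n := by
      rw [hs, ht, Finset.card_filter_add_card_filter_not]
      simp
    -- dist u v = sqrt (4 * t.card)
    have hdist : dist u v = Real.sqrt (4 * t.card) := by
      rw [EuclideanSpace.dist_eq]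
      congr 1
      have : ∀ k : Fin n, dist (u k) (v k) ^ 2 = if u k = v k then 0 else 4 := by
        intro k
        have huk := hpm u hu k
        have hvk := hpm v hv k
        rcases huk with h | h <;> rcases hvk with h' | h' <;>
          simp [Real.dist_eq, h, h'] <;> norm_num
      rw [Finset.sum_congr rfl (fun k _ => this k)]
      rw [Finset.sum_ite, Finset.sum_const, Finset.sum_const]
      simp [ht, mul_comm]
    have htlt : (t.card : ℝ) < n - 3 * ε * n := by
      have : (s.card : ℝ) + t.card = n := by exact_mod_cast hcard
      linarith
    calc |f u - f v| ≤ (1 + ε) * dist u v := hf u hu v hv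
      _ < Real.sqrt (4 * n) := by
        rw [hdist]
        have h1 : 0 ≤ (1 + ε) * Real.sqrt (4 * t.card) := by positivity
        rw [show (1:ℝ) + ε = Real.sqrt ((1+ε)^2) by rw [Real.sqrt_sq (by linarith)]]
        rw [← Real.sqrt_mul (by positivity)]
        apply Real.sqrt_lt_sqrt (by positivity)
        have hnn : (0:ℝ) ≤ n := Nat.cast_nonneg n
        have hm := mul_lt_mul_of_pos_left htlt (show (0:ℝ) < (1+ε)^2 by positivity)
        nlinarith [mul_nonneg hnn hε0.le, mul_nonneg (mul_nonneg hnn hε0.le) hε0.le,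
          mul_nonneg (mul_nonneg (mul_nonneg hnn hε0.le) hε0.le) hε0.le]
  have h1 := key x hx y hy (by simpa using hxny)
  have h2 := key x hx (-y) (hsym y hy) (by simpa using hxy)
  have h3 := key (-x) (hsym x hx) y hy (fun h => hxy (neg_inj.mp h))
  have h4 := key (-x) (hsym x hx) (-y) (hsym y hy)
    (fun h => hxny (by rw [neg_neg] at h; exact neg_eq_iff_eq_neg.mp h))
  exact cross_pair _ _ _ _ _ hfx hfy h1 h2 h3 h4
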